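/- The kernel of ψ contains yH ∗ yH: for all u, v ∈ yH, ψ(u ∗ v) = 0. -/

import Mathlib

open scoped BigOperators

/-- `H¹`: the ℚ-vector space with basis the words `z_{k₁}⋯z_{k_r}` in the letters
`z_k` (`k` a positive integer), encoded as finitely supported functions on lists. -/
abbrev H1 : Type := List ℕ+ →₀ ℚ

/-- The basis word `z_{k₁}⋯z_{k_r}` of `H¹` (the empty list is the unit `1`). -/
noncomputable def W (l : List ℕ+) : H1 := Finsupp.single l 1

/-- Left multiplication by the letter `z_k` (linear extension of `w ↦ z_k w`). -/
noncomputable def consL (k : ℕ+) (h : H1) : H1 := Finsupp.mapDomain (fun w => k :: w) h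

/-- Right multiplication by the letter `z_k` (linear extension of `w ↦ w z_k`). -/
noncomputable def mulRk (k : ℕ+) (h : H1) : H1 := Finsupp.mapDomain (fun w => w ++ [k]) h

/-- The harmonic (stuffle) product on words:
`1 ∗ u = u ∗ 1 = u`, `z_k u ∗ z_l v = z_k(u ∗ z_l v) + z_l(z_k u ∗ v) + z_{k+l}(u ∗ v)`. -/
noncomputable def harmW : List ℕ+ → List ℕ+ → H1
  | [], v => W v
  | u, [] => W u
  | k :: u, l :: v =>
      consL k (harmW u (l :: v)) + consL l (harmW (k :: u) v) + consL (k + l) (harmW u v)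
  termination_by u v => u.length + v.length

/-- The harmonic product `∗` on `H¹`, as the ℚ-bilinear extension of `harmW`. -/
noncomputable def harm (g h : H1) : H1 :=
  g.sum fun u c => h.sum fun v d => (c * d) • harmW u v

/-- The product `ш̃` on words in the letters `z_k`:
`1 ш̃ u = u ш̃ 1 = u`, `z_k u ш̃ z_l v = z_k(u ш̃ z_l v) + z_l(z_k u ш̃ v)`. -/
noncomputable def shtW : List ℕ+ → List ℕ+ → H1
  | [], v => W v
  | u, [] => W u
  | k :: u, l :: v => consL k (shtW u (l :: v)) + consL l (shtW (k :: u) v)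
  termination_by u v => u.length + v.length

/-- The shuffle product `ш̃` on `H¹` (on the alphabet `z₁, z₂, …`), bilinear extension. -/
noncomputable def sht (g h : H1) : H1 :=
  g.sum fun u c => h.sum fun v d => (c * d) • shtW u v

/-- Addition of a natural number to a positive natural number. -/
def pplus (k : ℕ+) (e : ℕ) : ℕ+ := ⟨(k : ℕ) + e, by have := k.pos; omega⟩

/-- `σ_m` on words: `σ_m(z_{k₁}⋯z_{k_r}) = Σ_{e₁+⋯+e_r=m} ∏_j C(k_j+e_j-1, e_j) z_{k₁+e₁}⋯z_{k_r+e_r}`,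
which is the word formula for `σ_m(1) = δ_{m,0}`, `σ_m(yw) = y(w ш x^m)`. -/
noncomputable def sigW : ℕ → List ℕ+ → H1
  | m, [] => if m = 0 then W [] else 0
  | m, k :: ks => ∑ e ∈ Finset.range (m + 1),
      ((((k : ℕ) + e - 1).choose e : ℚ)) • consL (pplus k e) (sigW (m - e) ks)
  termination_by m ks => ks.length

/-- `σ_m : H¹ → H¹`, linear extension. -/
noncomputable def sig (m : ℕ) (h : H1) : H1 := h.sum fun ks c => c • sigW m ks

/-- `S` on words: the word formula for `S(1) = 1`, `S(yw) = y S₁(w)` where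
`S₁(x) = x`, `S₁(y) = x + y`; explicitly `S(z_{k₁}⋯z_{k_r})` is the sum over all ways of
replacing separating commas by `+`. -/
noncomputable def StW : List ℕ+ → H1
  | [] => W []
  | [k] => W [k]
  | k :: l :: ks => consL k (StW (l :: ks)) + StW ((k + l) :: ks)
  termination_by ks => ks.length

/-- `S : H¹ → H¹`, linear extension. -/
noncomputable def St (h : H1) : H1 := h.sum fun ks c => c • StW ks

/-- `S̃ = S ∘ d` on words, where `d(x) = x`, `d(y) = -y`, so `d` multiplies a word of
depth `r` by `(-1)^r`. -/
noncomputable def SttW (ks : List ℕ+) : H1 := ((-1 : ℚ)) ^ ks.length • StW ks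

/-- `S̃ = S ∘ d : H¹ → H¹`, linear extension. -/
noncomputable def Stt (h : H1) : H1 := h.sum fun ks c => c • SttW ks

/-- `ψ` on words: `ψ(z_{k₁}⋯z_{k_r}) = Σ_{i=0}^{r-1} z_{k₁}⋯z_{k_i} ∗ S̃(σ₁(z_{k_r}⋯z_{k_{i+1}}))`. -/
noncomputable def psiW (ks : List ℕ+) : H1 :=
  ∑ i ∈ Finset.range ks.length, harm (W (ks.take i)) (Stt (sigW 1 ((ks.drop i).reverse)))

/-- `ψ : yH → H¹`, linear extension. -/
noncomputable def psi (h : H1) : H1 := h.sum fun ks c => c • psiW ks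

/-- `ψ̄` on words: `ψ̄(z_{k₁}⋯z_{k_r}) = Σ_{i=0}^{r-1} (-1)^{r-i} z_{k₁}⋯z_{k_i} ш̃ σ₁(z_{k_r}⋯z_{k_{i+1}})`. -/
noncomputable def psibW (ks : List ℕ+) : H1 :=
  ∑ i ∈ Finset.range ks.length,
    ((-1 : ℚ)) ^ (ks.length - i) • sht (W (ks.take i)) (sigW 1 ((ks.drop i).reverse))

/-- `ψ̄ : yH → H¹`, linear extension. -/
noncomputable def psib (h : H1) : H1 := h.sum fun ks c => c • psibW ks

/-- `ρ` on words:
`ρ(z_{k₁}⋯z_{k_r}) = Σ_{i=1}^{r} (-1)^{r-i} (z_{k₁}⋯z_{k_{i-1}} ш̃ z_{k_r}⋯z_{k_{i+1}}) z_{k_i}`. -/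
noncomputable def rhoW (ks : List ℕ+) : H1 :=
  ∑ i : Fin ks.length, ((-1 : ℚ)) ^ (ks.length - 1 - (i : ℕ)) •
    mulRk (ks.get i) (sht (W (ks.take (i : ℕ))) (W ((ks.drop ((i : ℕ) + 1)).reverse)))

/-- `ρ : yH → yH`, linear extension. -/
noncomputable def rho (h : H1) : H1 := h.sum fun ks c => c • rhoW ks

/-- `yH ⊆ H¹`: the span of the nonempty words `z_{k₁}⋯z_{k_r}` (`r ≥ 1`). -/
noncomputable def yH1 : Submodule ℚ H1 := Submodule.span ℚ {h | ∃ k ks, h = W (k :: ks)}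

/-- `yH ∗ yH`: the ℚ-span of the harmonic products `w₁ ∗ w₂` with `w₁, w₂ ∈ yH`. -/
noncomputable def harmSpan : Submodule ℚ H1 :=
  Submodule.span ℚ {h | ∃ u ∈ yH1, ∃ v ∈ yH1, h = harm u v}

/-- `yH ш̃ yH`: the ℚ-span of the products `w₁ ш̃ w₂` with `w₁, w₂ ∈ yH`. -/
noncomputable def shtSpan : Submodule ℚ H1 :=
  Submodule.span ℚ {h | ∃ u ∈ yH1, ∃ v ∈ yH1, h = sht u v}


/-! ### Infrastructure -/

noncomputable def lift (F : List ℕ+ → H1) : H1 →ₗ[ℚ] H1 := Finsupp.linearCombination ℚ F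

lemma lift_W (F : List ℕ+ → H1) (w : List ℕ+) : lift F (W w) = F w := by
  simp [lift, W, Finsupp.linearCombination_single]

lemma lift_apply (F : List ℕ+ → H1) (h : H1) : lift F h = h.sum fun w c => c • F w := by
  simp [lift, Finsupp.linearCombination_apply]

lemma lift_add_fun (F G : List ℕ+ → H1) (h : H1) :
    lift (fun w => F w + G w) h = lift F h + lift G h := by
  simp [lift_apply, smul_add, Finsupp.sum_add]

lemma single_eq_smul_W (w : List ℕ+) (c : ℚ) : Finsupp.single w c = c • W w := by
  simp [W, Finsupp.smul_single]

lemma harm_def (g h : H1) : harm g h = lift (fun u => lift (harmW u) h) g := by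
  rw [harm, lift_apply]
  refine Finsupp.sum_congr fun u _ => ?_
  rw [lift_apply, Finsupp.smul_sum]
  exact Finsupp.sum_congr fun v _ => by rw [mul_smul]

lemma harm_W_left (u : List ℕ+) (h : H1) : harm (W u) h = lift (harmW u) h := by
  rw [harm_def, lift_W]

lemma harm_W_W (u v : List ℕ+) : harm (W u) (W v) = harmW u v := by
  rw [harm_W_left, lift_W]

lemma harm_zero_left (h : H1) : harm 0 h = 0 := by rw [harm_def, map_zero]

lemma harm_add_left (g g' h : H1) : harm (g + g') h = harm g h + harm g' h := by
  rw [harm_def, map_add, ← harm_def, ← harm_def]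

lemma harm_smul_left (c : ℚ) (g h : H1) : harm (c • g) h = c • harm g h := by
  rw [harm_def, map_smul, ← harm_def]

lemma harm_zero_right (g : H1) : harm g 0 = 0 := by
  rw [harm_def]
  have : (fun u => lift (harmW u) (0 : H1)) = fun _ => (0 : H1) := by
    funext u; rw [map_zero]
  rw [this]
  simp [lift_apply]

lemma harm_add_right (g h h' : H1) : harm g (h + h') = harm g h + harm g h' := by
  rw [harm_def, harm_def, harm_def,
    show (fun u => lift (harmW u) (h + h')) = fun u => lift (harmW u) h + lift (harmW u) h'
      from funext fun u => map_add _ _ _, lift_add_fun]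

lemma harm_smul_right (c : ℚ) (g h : H1) : harm g (c • h) = c • harm g h := by
  rw [harm, harm, Finsupp.smul_sum]
  refine Finsupp.sum_congr fun u _ => ?_
  rw [Finsupp.sum_smul_index (fun v => by rw [mul_zero, zero_smul]), Finsupp.smul_sum]
  exact Finsupp.sum_congr fun v _ => by rw [mul_left_comm, smul_smul]


lemma harm_sum_left {α : Type*} (s : Finset α) (f : α → H1) (h : H1) :
    harm (∑ i ∈ s, f i) h = ∑ i ∈ s, harm (f i) h := by
  classical
  induction s using Finset.cons_induction with
  | empty => simp [harm_zero_left]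
  | cons a s ha ih => rw [Finset.sum_cons, Finset.sum_cons, harm_add_left, ih]

lemma harm_sum_right {α : Type*} (s : Finset α) (g : H1) (f : α → H1) :
    harm g (∑ i ∈ s, f i) = ∑ i ∈ s, harm g (f i) := by
  classical
  induction s using Finset.cons_induction with
  | empty => simp [harm_zero_right]
  | cons a s ha ih => rw [Finset.sum_cons, Finset.sum_cons, harm_add_right, ih]

/-! ### consL lemmas -/

lemma consL_W (k : ℕ+) (w : List ℕ+) : consL k (W w) = W (k :: w) := by
  simp [consL, W, Finsupp.mapDomain_single]

lemma consL_zero (k : ℕ+) : consL k (0 : H1) = 0 := Finsupp.mapDomain_zero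

lemma consL_add (k : ℕ+) (g h : H1) : consL k (g + h) = consL k g + consL k h :=
  Finsupp.mapDomain_add

lemma consL_smul (k : ℕ+) (c : ℚ) (h : H1) : consL k (c • h) = c • consL k h :=
  Finsupp.mapDomain_smul c h

lemma consL_sum {α : Type*} (k : ℕ+) (s : Finset α) (f : α → H1) :
    consL k (∑ i ∈ s, f i) = ∑ i ∈ s, consL k (f i) := by
  classical
  induction s using Finset.cons_induction with
  | empty => simp [consL_zero]
  | cons a s ha ih => rw [Finset.sum_cons, Finset.sum_cons, consL_add, ih]

lemma lift_consL (F : List ℕ+ → H1) (k : ℕ+) (h : H1) :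
    lift F (consL k h) = lift (fun w => F (k :: w)) h := by
  rw [lift, consL, Finsupp.linearCombination_mapDomain]; rfl

lemma harmW_nil_left (v : List ℕ+) : harmW [] v = W v := by rw [harmW]

lemma harmW_nil_right (u : List ℕ+) : harmW u [] = W u := by
  cases u with
  | nil => rw [harmW]
  | cons k u => rw [harmW.eq_def]

lemma harmW_cons_cons (k l : ℕ+) (u v : List ℕ+) :
    harmW (k :: u) (l :: v) =
      consL k (harmW u (l :: v)) + consL l (harmW (k :: u) v) + consL (k + l) (harmW u v) := by
  rw [harmW]

lemma harm_nil_left (h : H1) : harm (W []) h = h := by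
  rw [harm_W_left, lift_apply]
  conv_rhs => rw [← h.sum_single]
  exact Finsupp.sum_congr fun w _ => by rw [harmW_nil_left, single_eq_smul_W]

lemma harm_nil_right (g : H1) : harm g (W []) = g := by
  rw [harm_def]
  have : (fun u => lift (harmW u) (W [])) = W := by
    funext u; rw [lift_W, harmW_nil_right]
  rw [this, lift_apply]
  conv_rhs => rw [← g.sum_single]
  exact Finsupp.sum_congr fun w _ => by rw [single_eq_smul_W]

/-! ### The quasi-shuffle recursion, commutativity, associativity -/

lemma harm_consL_consL (a b : ℕ+) (g h : H1) :
    harm (consL a g) (consL b h) =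
      consL a (harm g (consL b h)) + consL b (harm (consL a g) h) + consL (a + b) (harm g h) := by
  induction g using Finsupp.induction_linear with
  | zero => simp [consL_zero, harm_zero_left, harm_zero_right]
  | add f g ihf ihg =>
    simp only [consL_add, harm_add_left, harm_add_right, ihf, ihg]; abel
  | single u c =>
    induction h using Finsupp.induction_linear with
    | zero => simp [consL_zero, harm_zero_left, harm_zero_right]
    | add f g ihf ihg =>
      simp only [consL_add, harm_add_left, harm_add_right, ihf, ihg]; abel
    | single v d =>
      rw [single_eq_smul_W, single_eq_smul_W]
      simp only [consL_smul, harm_smul_left, harm_smul_right, consL_W, harm_W_W, smul_add]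
      rw [harmW_cons_cons]
      simp only [smul_add]

theorem harmW_comm : ∀ u v : List ℕ+, harmW u v = harmW v u
  | [], v => by rw [harmW_nil_left, harmW_nil_right]
  | (k :: u), [] => by rw [harmW_nil_left, harmW_nil_right]
  | (k :: u), (l :: v) => by
    rw [harmW_cons_cons, harmW_cons_cons, harmW_comm u (l :: v), harmW_comm (k :: u) v,
      harmW_comm u v, add_comm k l]
    abel
  termination_by u v => u.length + v.length

lemma harm_comm (g h : H1) : harm g h = harm h g := by
  induction g using Finsupp.induction_linear with
  | zero => rw [harm_zero_left, harm_zero_right]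
  | add f g ihf ihg => rw [harm_add_left, harm_add_right, ihf, ihg]
  | single u c =>
    induction h using Finsupp.induction_linear with
    | zero => rw [harm_zero_left, harm_zero_right]
    | add f g ihf ihg => rw [harm_add_left, harm_add_right, ihf, ihg]
    | single v d =>
      rw [single_eq_smul_W, single_eq_smul_W, harm_smul_left, harm_smul_right,
        harm_smul_left, harm_smul_right, harm_W_W, harm_W_W, harmW_comm]
      rw [smul_comm]

theorem harm_assoc_W : ∀ u v w : List ℕ+, harm (harmW u v) (W w) = harm (W u) (harmW v w)
  | [], v, w => by rw [harmW_nil_left, harm_nil_left, harm_W_W]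
  | (k :: u), [], w => by rw [harmW_nil_right, harmW_nil_left]
  | (k :: u), (l :: v), [] => by
    rw [harmW_nil_right, harm_nil_right, harm_W_W]
  | (a :: u), (b :: v), (c :: w) => by
    have hx : ∀ (x : ℕ+) (G : H1), harm (consL x G) (W (c :: w)) =
        consL x (harm G (W (c :: w))) + consL c (harm (consL x G) (W w)) +
          consL (x + c) (harm G (W w)) := by
      intro x G
      conv_lhs => rw [← consL_W c w]
      rw [harm_consL_consL, consL_W]
    have hy : ∀ (y : ℕ+) (E : H1), harm (W (a :: u)) (consL y E) =
        consL a (harm (W u) (consL y E)) + consL y (harm (W (a :: u)) E) +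
          consL (a + y) (harm (W u) E) := by
      intro y E
      conv_lhs => rw [← consL_W a u]
      rw [harm_consL_consL, consL_W]
    rw [harmW_cons_cons a b u v, harm_add_left, harm_add_left, hx, hx, hx]
    -- regroup the three `consL c` terms
    have hgroup : consL c (harm (consL a (harmW u (b :: v))) (W w)) +
        consL c (harm (consL b (harmW (a :: u) v)) (W w)) +
        consL c (harm (consL (a + b) (harmW u v)) (W w)) =
        consL c (harm (W (a :: u)) (harmW (b :: v) w)) := by
      rw [← consL_add, ← consL_add, ← harm_add_left, ← harm_add_left, ← harmW_cons_cons,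
        harm_assoc_W (a :: u) (b :: v) w]
    rw [harm_assoc_W u (b :: v) (c :: w), harm_assoc_W (a :: u) v (c :: w),
      harm_assoc_W u v (c :: w), harm_assoc_W u (b :: v) w, harm_assoc_W (a :: u) v w,
      harm_assoc_W u v w]
    rw [show ∀ p q r s t x y z zz : H1,
      (p + q + r) + (s + t + x) + (y + z + zz) = (q + t + z) + (p + s + y + (r + x + zz))
      from fun _ _ _ _ _ _ _ _ _ => by abel, hgroup]
    conv_rhs => rw [harmW_cons_cons b c v w, harm_add_right, harm_add_right,
      hy b (harmW v (c :: w)), hy c (harmW (b :: v) w), hy (b + c) (harmW v w)]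
    have hgroup2 : consL a (harm (W u) (consL b (harmW v (c :: w)))) +
        consL a (harm (W u) (consL c (harmW (b :: v) w))) +
        consL a (harm (W u) (consL (b + c) (harmW v w))) =
        consL a (harm (W u) (harmW (b :: v) (c :: w))) := by
      rw [← consL_add, ← consL_add, ← harm_add_right, ← harm_add_right, ← harmW_cons_cons]
    conv_rhs => rw [show ∀ p q r s t x y z zz : H1,
      (p + q + r) + (s + t + x) + (y + z + zz) = (p + s + y) + (q + r + (t + x + (z + zz)))
      from fun _ _ _ _ _ _ _ _ _ => by abel, hgroup2]
    simp only [← add_assoc]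
    abel
  termination_by u v w => u.length + v.length + w.length

lemma harm_assoc (g h e : H1) : harm (harm g h) e = harm g (harm h e) := by
  induction g using Finsupp.induction_linear with
  | zero => simp [harm_zero_left]
  | add f g ihf ihg => simp only [harm_add_left, ihf, ihg]
  | single u c =>
    induction h using Finsupp.induction_linear with
    | zero => simp [harm_zero_left, harm_zero_right]
    | add f g ihf ihg => simp only [harm_add_left, harm_add_right, ihf, ihg]
    | single v d =>
      induction e using Finsupp.induction_linear with
      | zero => simp [harm_zero_right]
      | add f g ihf ihg => simp only [harm_add_right, ihf, ihg]
      | single w c' =>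
        rw [single_eq_smul_W, single_eq_smul_W, single_eq_smul_W]
        simp only [harm_smul_left, harm_smul_right, harm_W_W]
        rw [harm_assoc_W]

lemma harm_swap (a b c d : H1) :
    harm (harm a b) (harm c d) = harm (harm a c) (harm b d) := by
  rw [harm_assoc, harm_assoc, ← harm_assoc b c d, harm_comm b c, harm_assoc c b d]

/-! ### Convolution and the bialgebra compatibility -/

noncomputable def consLL (k : ℕ+) : H1 →ₗ[ℚ] H1 := Finsupp.lmapDomain ℚ ℚ (k :: ·)

lemma consLL_apply (k : ℕ+) (h : H1) : consLL k h = consL k h := rfl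

noncomputable def convW (f g : H1 →ₗ[ℚ] H1) (w : List ℕ+) : H1 :=
  ∑ i ∈ Finset.range (w.length + 1), harm (f (W (w.take i))) (g (W (w.drop i)))

noncomputable def Phi (f g : H1 →ₗ[ℚ] H1) : H1 →ₗ[ℚ] H1 := lift (convW f g)

lemma Phi_W (f g : H1 →ₗ[ℚ] H1) (w : List ℕ+) : Phi f g (W w) = convW f g w := lift_W _ _

lemma Phi_consL (f g : H1 →ₗ[ℚ] H1) (k : ℕ+) (h : H1) :
    Phi f g (consL k h) = harm (f (W [])) (g (consL k h)) + Phi (f ∘ₗ consLL k) g h := by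
  induction h using Finsupp.induction_linear with
  | zero => simp [consL_zero, harm_zero_right]
  | add p q ihp ihq =>
    conv_lhs => rw [consL_add, map_add, ihp, ihq]
    conv_rhs => rw [consL_add, map_add, harm_add_right, map_add]
    abel
  | single w c =>
    rw [single_eq_smul_W, consL_smul, map_smul, map_smul, map_smul, harm_smul_right, ← smul_add]
    congr 1
    rw [consL_W, Phi_W, Phi_W, convW, convW]
    simp only [List.length_cons]
    rw [Finset.sum_range_succ']
    simp only [List.take_succ_cons, List.drop_succ_cons, List.take_zero, List.drop_zero,
      LinearMap.comp_apply, consLL_apply, consL_W]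
    rw [add_comm]

theorem conv_mul : ∀ (u v : List ℕ+) (f g : H1 →ₗ[ℚ] H1),
    Phi f g (harmW u v) =
      ∑ i ∈ Finset.range (u.length + 1), ∑ j ∈ Finset.range (v.length + 1),
        harm (f (harmW (u.take i) (v.take j))) (g (harmW (u.drop i) (v.drop j)))
  | [], v, f, g => by
    rw [harmW_nil_left, Phi_W, convW]
    simp [harmW_nil_left]
  | (k :: u), [], f, g => by
    rw [harmW_nil_right, Phi_W, convW]
    simp [harmW_nil_right]
  | (a :: u), (b :: v), f, g => by
    have hG : Phi f g (harmW (a :: u) (b :: v)) =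
        harm (f (W [])) (g (harmW (a :: u) (b :: v))) +
          (Phi (f ∘ₗ consLL a) g (harmW u (b :: v)) + Phi (f ∘ₗ consLL b) g (harmW (a :: u) v) +
            Phi (f ∘ₗ consLL (a + b)) g (harmW u v)) := by
      conv_lhs => rw [harmW_cons_cons, map_add, map_add, Phi_consL, Phi_consL, Phi_consL]
      rw [show ∀ h1 P1 h2 P2 h3 P3 : H1,
        (h1 + P1 + (h2 + P2) + (h3 + P3)) = (h1 + h2 + h3) + (P1 + P2 + P3)
        from fun _ _ _ _ _ _ => by abel]
      rw [← harm_add_right, ← harm_add_right, ← map_add, ← map_add, ← harmW_cons_cons]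
    rw [hG, conv_mul u (b :: v) (f ∘ₗ consLL a) g, conv_mul (a :: u) v (f ∘ₗ consLL b) g,
      conv_mul u v (f ∘ₗ consLL (a + b)) g]
    simp only [LinearMap.comp_apply, consLL_apply, List.length_cons]
    -- split the first IH sum (inner index)
    rw [show (∑ i ∈ Finset.range (u.length + 1), ∑ j ∈ Finset.range (v.length + 1 + 1),
        harm (f (consL a (harmW (u.take i) ((b :: v).take j))))
          (g (harmW (u.drop i) ((b :: v).drop j)))) =
      (∑ i ∈ Finset.range (u.length + 1), ∑ j ∈ Finset.range (v.length + 1),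
        harm (f (consL a (harmW (u.take i) (b :: v.take j))))
          (g (harmW (u.drop i) (v.drop j)))) +
      ∑ i ∈ Finset.range (u.length + 1),
        harm (f (W (a :: u.take i))) (g (harmW (u.drop i) (b :: v))) from by
      rw [← Finset.sum_add_distrib]
      refine Finset.sum_congr rfl fun i _ => ?_
      rw [Finset.sum_range_succ']
      simp [harmW_nil_right, consL_W]]
    -- split the second IH sum (outer index)
    rw [show (∑ i ∈ Finset.range (u.length + 1 + 1), ∑ j ∈ Finset.range (v.length + 1),
        harm (f (consL b (harmW ((a :: u).take i) (v.take j))))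
          (g (harmW ((a :: u).drop i) (v.drop j)))) =
      (∑ i ∈ Finset.range (u.length + 1), ∑ j ∈ Finset.range (v.length + 1),
        harm (f (consL b (harmW (a :: u.take i) (v.take j))))
          (g (harmW (u.drop i) (v.drop j)))) +
      ∑ j ∈ Finset.range (v.length + 1),
        harm (f (W (b :: v.take j))) (g (harmW (a :: u) (v.drop j))) from by
      rw [Finset.sum_range_succ']
      simp [harmW_nil_left, consL_W]]
    -- now the right-hand side
    conv_rhs => rw [Finset.sum_range_succ']
    conv_rhs => rw [Finset.sum_range_succ' _ (v.length + 1)]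
    rw [show (∑ i ∈ Finset.range (u.length + 1), ∑ j ∈ Finset.range (v.length + 1 + 1),
        harm (f (harmW ((a :: u).take (i + 1)) ((b :: v).take j)))
          (g (harmW ((a :: u).drop (i + 1)) ((b :: v).drop j)))) =
      ∑ i ∈ Finset.range (u.length + 1),
        ((∑ j ∈ Finset.range (v.length + 1),
          (harm (f (consL a (harmW (u.take i) (b :: v.take j))))
            (g (harmW (u.drop i) (v.drop j))) +
           harm (f (consL b (harmW (a :: u.take i) (v.take j))))
            (g (harmW (u.drop i) (v.drop j))) +
           harm (f (consL (a + b) (harmW (u.take i) (v.take j))))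
            (g (harmW (u.drop i) (v.drop j))))) +
         harm (f (W (a :: u.take i))) (g (harmW (u.drop i) (b :: v)))) from by
      refine Finset.sum_congr rfl fun i _ => ?_
      rw [Finset.sum_range_succ']
      congr 1
      · refine Finset.sum_congr rfl fun j _ => ?_
        simp only [List.take_succ_cons, List.drop_succ_cons]
        rw [harmW_cons_cons, map_add, map_add, harm_add_left, harm_add_left]
      · simp [harmW_nil_right]]
    simp only [Finset.sum_add_distrib, List.take_succ_cons, List.drop_succ_cons,
      List.take_zero, List.drop_zero, harmW_nil_left, harmW_nil_right]
    abel
  termination_by u v => u.length + v.length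

/-! ### The antipode `AW` and Hoffman's identity -/

noncomputable def AW (w : List ℕ+) : H1 := SttW w.reverse

lemma StW_nil : StW [] = W [] := by rw [StW]
lemma StW_single (k : ℕ+) : StW [k] = W [k] := by rw [StW]
lemma StW_cons_cons (k l : ℕ+) (t : List ℕ+) :
    StW (k :: l :: t) = consL k (StW (l :: t)) + StW ((k + l) :: t) := by rw [StW]

lemma SttW_nil : SttW [] = W [] := by simp [SttW, StW_nil]
lemma SttW_single (k : ℕ+) : SttW [k] = -W [k] := by simp [SttW, StW_single]
lemma SttW_cons_cons (k m : ℕ+) (t : List ℕ+) :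
    SttW (k :: m :: t) = -consL k (SttW (m :: t)) - SttW ((k + m) :: t) := by
  simp only [SttW, StW_cons_cons, List.length_cons, smul_add, consL_smul, smul_smul, pow_succ]
  module

lemma AW_nil : AW [] = W [] := SttW_nil
lemma AW_single (k : ℕ+) : AW [k] = -W [k] := by
  rw [AW, List.reverse_singleton, SttW_single]
lemma AW_concat_concat (q : List ℕ+) (m k : ℕ+) :
    AW ((q ++ [m]) ++ [k]) = -consL k (AW (q ++ [m])) - AW (q ++ [m + k]) := by
  rw [AW, AW, AW, List.reverse_append, List.reverse_append, List.reverse_append]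
  simp only [List.reverse_singleton, List.singleton_append, List.reverse_append,
    List.cons_append, List.nil_append]
  rw [SttW_cons_cons]
  norm_num [add_comm k m]

lemma consL_neg (k : ℕ+) (h : H1) : consL k (-h) = -consL k h := by
  rw [← neg_one_smul ℚ h, consL_smul, neg_one_smul]

lemma harm_neg_right (g h : H1) : harm g (-h) = -harm g h := by
  rw [← neg_one_smul ℚ h, harm_smul_right, neg_one_smul]

lemma harm_sub_right (g x y : H1) : harm g (x - y) = harm g x - harm g y := by
  rw [sub_eq_add_neg, harm_add_right, harm_neg_right, sub_eq_add_neg]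

noncomputable def raW (w : List ℕ+) : H1 :=
  ∑ i ∈ Finset.range (w.length + 1), harm (W (w.take i)) (AW (w.drop i))

noncomputable def qW (k : ℕ+) (v : List ℕ+) : H1 :=
  ∑ i ∈ Finset.range (v.length + 1), harm (W (v.take i)) (consL k (AW (v.drop i)))

noncomputable def qtgt : ℕ+ → List ℕ+ → H1
  | k, [] => W [k]
  | k, [a] => W [a, k] + W [a + k]
  | k, a :: b :: v => consL a (qtgt k (b :: v))

lemma qtgt_nil (k : ℕ+) : qtgt k [] = W [k] := rfl
lemma qtgt_single (k a : ℕ+) : qtgt k [a] = W [a, k] + W [a + k] := rfl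
lemma qtgt_cons2 (k a b : ℕ+) (v : List ℕ+) :
    qtgt k (a :: b :: v) = consL a (qtgt k (b :: v)) := rfl

lemma qtgt_concat (k : ℕ+) : ∀ (v : List ℕ+) (m : ℕ+),
    qtgt k (v ++ [m]) = W ((v ++ [m]) ++ [k]) + W (v ++ [m + k])
  | [], m => by simp [qtgt_single]
  | (a :: v), m => by
    cases v with
    | nil => simp [qtgt_cons2, qtgt_single, consL_add, consL_W]
    | cons b v' =>
      rw [show ((a :: b :: v') ++ [m] : List ℕ+) = a :: ((b :: v') ++ [m]) from rfl,
        show ((b :: v') ++ [m] : List ℕ+) = b :: (v' ++ [m]) from rfl, qtgt_cons2,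
        show (b :: (v' ++ [m]) : List ℕ+) = (b :: v') ++ [m] from rfl,
        qtgt_concat k (b :: v') m]
      simp [consL_add, consL_W]

theorem raq (n : ℕ) :
    (∀ w : List ℕ+, w.length ≤ n → raW w = if w = [] then W [] else 0) ∧
    (∀ (k : ℕ+) (v : List ℕ+), v.length ≤ n → qW k v = qtgt k v) := by
  induction n with
  | zero =>
    constructor
    · intro w hw
      rw [List.length_eq_zero_iff.mp (Nat.le_zero.mp hw)]
      simp [raW, AW_nil, harm_nil_left]
    · intro k v hv
      rw [List.length_eq_zero_iff.mp (Nat.le_zero.mp hv)]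
      simp [qW, qtgt, AW_nil, harm_nil_left, consL_W]
  | succ n ih =>
    have hE : ∀ w : List ℕ+, w.length ≤ n + 1 → raW w = if w = [] then W [] else 0 := by
      intro w hw
      rcases Nat.lt_or_ge w.length (n + 1) with h | h
      · exact ih.1 w (Nat.lt_succ_iff.mp h)
      have hwn : w.length = n + 1 := le_antisymm hw h
      rcases w.eq_nil_or_concat' with rfl | ⟨v, k, rfl⟩
      · simp at hwn
      have hlenw : (v ++ [k]).length = v.length + 1 := by simp
      have hvn : v.length ≤ n := by omega
      have hsplit : raW (v ++ [k]) =
          (∑ i ∈ Finset.range (v.length + 1), harm (W (v.take i)) (AW (v.drop i ++ [k]))) +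
            W (v ++ [k]) := by
        rw [raW, List.length_append, List.length_singleton]
        rw [Finset.sum_range_succ]
        congr 1
        · refine Finset.sum_congr rfl fun i hi => ?_
          have hi' : i ≤ v.length := by
            simp [Finset.mem_range] at hi; omega
          rw [List.take_append_of_le_length hi', List.drop_append_of_le_length hi']
        · rw [show v.length + 1 = (v ++ [k]).length by simp, List.take_length, List.drop_length,
            AW_nil, harm_nil_right]
      rcases v.eq_nil_or_concat' with rfl | ⟨v', m, rfl⟩
      · simp only [hsplit]
        simp [AW_single, harm_nil_left]
      · -- v = v' ++ [m]
        have hsum : (∑ i ∈ Finset.range ((v' ++ [m]).length + 1),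
            harm (W ((v' ++ [m]).take i)) (AW ((v' ++ [m]).drop i ++ [k]))) =
            (∑ i ∈ Finset.range (v'.length + 1),
              harm (W ((v' ++ [m]).take i))
                (-consL k (AW ((v' ++ [m]).drop i)) - AW (v'.drop i ++ [m + k]))) +
              harm (W (v' ++ [m])) (AW [k]) := by
          rw [List.length_append, List.length_singleton, Finset.sum_range_succ]
          congr 1
          · refine Finset.sum_congr rfl fun i hi => ?_
            have hi' : i ≤ v'.length := by
              simp [Finset.mem_range] at hi; omega
            rw [List.drop_append_of_le_length hi', AW_concat_concat]
          · rw [show v'.length + 1 = (v' ++ [m]).length by simp, List.take_length,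
              List.drop_length, List.nil_append]
        rw [hsplit, hsum]
        have hq : qW k (v' ++ [m]) =
            (∑ i ∈ Finset.range (v'.length + 1),
              harm (W ((v' ++ [m]).take i)) (consL k (AW ((v' ++ [m]).drop i)))) +
              harm (W (v' ++ [m])) (W [k]) := by
          rw [qW, List.length_append, List.length_singleton, Finset.sum_range_succ]
          congr 1
          rw [show v'.length + 1 = (v' ++ [m]).length by simp, List.take_length,
            List.drop_length, AW_nil, consL_W]
        have hra : raW (v' ++ [m + k]) =
            (∑ i ∈ Finset.range (v'.length + 1),
              harm (W ((v' ++ [m]).take i)) (AW (v'.drop i ++ [m + k]))) + W (v' ++ [m + k]) := by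
          rw [raW, List.length_append, List.length_singleton, Finset.sum_range_succ]
          congr 1
          · refine Finset.sum_congr rfl fun i hi => ?_
            have hi' : i ≤ v'.length := by
              simp [Finset.mem_range] at hi; omega
            rw [List.take_append_of_le_length hi', List.take_append_of_le_length hi',
              List.drop_append_of_le_length hi']
          · rw [show v'.length + 1 = (v' ++ [m + k]).length by simp, List.take_length,
              List.drop_length, AW_nil, harm_nil_right]
        have hraz : raW (v' ++ [m + k]) = 0 := by
          rw [ih.1 (v' ++ [m + k]) (by
            have : (v' ++ [m] ++ [k]).length = v'.length + 2 := by simp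
            have h2 : (v' ++ [m + k]).length = v'.length + 1 := by simp
            omega)]
          simp
        have hqz : qW k (v' ++ [m]) = W ((v' ++ [m]) ++ [k]) + W (v' ++ [m + k]) := by
          rw [ih.2 k (v' ++ [m]) (by
            have : (v' ++ [m] ++ [k]).length = v'.length + 2 := by simp
            have h2 : (v' ++ [m]).length = v'.length + 1 := by simp
            omega), qtgt_concat]
        -- combine
        have expand : ∀ i ∈ Finset.range (v'.length + 1),
            harm (W ((v' ++ [m]).take i))
              (-consL k (AW ((v' ++ [m]).drop i)) - AW (v'.drop i ++ [m + k])) =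
            -harm (W ((v' ++ [m]).take i)) (consL k (AW ((v' ++ [m]).drop i))) -
              harm (W ((v' ++ [m]).take i)) (AW (v'.drop i ++ [m + k])) := by
          intro i _
          rw [harm_sub_right, harm_neg_right]
        rw [Finset.sum_congr rfl expand, Finset.sum_sub_distrib, Finset.sum_neg_distrib]
        have h1 : (∑ i ∈ Finset.range (v'.length + 1),
            harm (W ((v' ++ [m]).take i)) (consL k (AW ((v' ++ [m]).drop i)))) =
            qW k (v' ++ [m]) - harm (W (v' ++ [m])) (W [k]) := by
          rw [hq]; abel
        have h2 : (∑ i ∈ Finset.range (v'.length + 1),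
            harm (W ((v' ++ [m]).take i)) (AW (v'.drop i ++ [m + k]))) =
            raW (v' ++ [m + k]) - W (v' ++ [m + k]) := by
          rw [hra]; abel
        rw [h1, h2, hraz, hqz, AW_single]
        rw [show harm (W (v' ++ [m])) (-W [k]) = -harm (W (v' ++ [m])) (W [k]) by
          rw [show (-W [k] : H1) = (-1 : ℚ) • W [k] by rw [neg_smul, one_smul],
            harm_smul_right, neg_smul, one_smul]]
        have : (v' ++ [m] ++ [k] : List ℕ+) ≠ [] := by simp
        rw [if_neg this]
        abel
    refine ⟨hE, ?_⟩
    intro k v hv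
    cases v with
    | nil => simp [qW, qtgt, AW_nil, harm_nil_left, consL_W]
    | cons a v₀ =>
      have hv₀ : v₀.length ≤ n := by simp at hv; omega
      have hx : ∀ (p : List ℕ+) (X : H1), harm (W (a :: p)) (consL k X) =
          consL a (harm (W p) (consL k X)) + consL k (harm (W (a :: p)) X) +
            consL (a + k) (harm (W p) X) := by
        intro p X
        conv_lhs => rw [← consL_W a p]
        rw [harm_consL_consL, consL_W]
      have hsplit : qW k (a :: v₀) =
          (∑ i ∈ Finset.range (v₀.length + 1),
            harm (W (a :: v₀.take i)) (consL k (AW (v₀.drop i)))) + consL k (AW (a :: v₀)) := by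
        rw [qW, List.length_cons, Finset.sum_range_succ']
        simp only [List.take_succ_cons, List.drop_succ_cons, List.take_zero, List.drop_zero]
        rw [harm_nil_left]
      have hexp : ∀ i ∈ Finset.range (v₀.length + 1),
          harm (W (a :: v₀.take i)) (consL k (AW (v₀.drop i))) =
          consL a (harm (W (v₀.take i)) (consL k (AW (v₀.drop i)))) +
            consL k (harm (W (a :: v₀.take i)) (AW (v₀.drop i))) +
            consL (a + k) (harm (W (v₀.take i)) (AW (v₀.drop i))) := fun i _ => hx _ _
      rw [hsplit, Finset.sum_congr rfl hexp]
      rw [Finset.sum_add_distrib, Finset.sum_add_distrib, ← consL_sum, ← consL_sum, ← consL_sum]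
      have hmid : raW (a :: v₀) =
          (∑ i ∈ Finset.range (v₀.length + 1),
            harm (W (a :: v₀.take i)) (AW (v₀.drop i))) + AW (a :: v₀) := by
        rw [raW, List.length_cons, Finset.sum_range_succ']
        simp only [List.take_succ_cons, List.drop_succ_cons, List.take_zero, List.drop_zero]
        rw [harm_nil_left]
      rw [show (∑ i ∈ Finset.range (v₀.length + 1),
          harm (W (a :: v₀.take i)) (AW (v₀.drop i))) = raW (a :: v₀) - AW (a :: v₀) from by
        rw [hmid]; abel]
      have hqv : (∑ i ∈ Finset.range (v₀.length + 1),
          harm (W (v₀.take i)) (consL k (AW (v₀.drop i)))) = qW k v₀ := rfl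
      have hrav : (∑ i ∈ Finset.range (v₀.length + 1),
          harm (W (v₀.take i)) (AW (v₀.drop i))) = raW v₀ := rfl
      rw [hqv, hrav, ih.2 k v₀ hv₀, hE (a :: v₀) hv, ih.1 v₀ hv₀]
      rw [if_neg (by simp : (a :: v₀ : List ℕ+) ≠ [])]
      cases v₀ with
      | nil =>
        rw [if_pos rfl, qtgt_nil, qtgt_single, zero_sub, consL_neg]
        simp only [consL_W]
        abel
      | cons b v₁ =>
        rw [if_neg (by simp : (b :: v₁ : List ℕ+) ≠ []), qtgt_cons2, zero_sub, consL_neg,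
          consL_zero]
        abel

theorem raW_eq (w : List ℕ+) : raW w = if w = [] then W [] else 0 :=
  (raq w.length).1 w le_rfl

theorem qW_unused : True := trivial

/-! ### Multiplicativity of the antipode -/

lemma consL_apply_nil (k : ℕ+) (h : H1) : consL k h [] = 0 :=
  Finsupp.mapDomain_notin_range _ _ (by simp)

lemma W_apply_nil (v : List ℕ+) : (W v) [] = if v = [] then 1 else 0 := by
  rw [W, Finsupp.single_apply]

lemma harmW_apply_nil (u v : List ℕ+) :
    (harmW u v) [] = if u = [] ∧ v = [] then 1 else 0 := by
  cases u with
  | nil =>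
    rw [harmW_nil_left, W_apply_nil]
    by_cases h : v = [] <;> simp [h]
  | cons k u =>
    cases v with
    | nil => rw [harmW_nil_right, W_apply_nil]; simp
    | cons l v =>
      rw [harmW_cons_cons]
      simp [Finsupp.add_apply, consL_apply_nil]

lemma lift_eps (h : H1) :
    lift (fun w => if w = [] then W [] else (0 : H1)) h = h [] • W [] := by
  induction h using Finsupp.induction_linear with
  | zero => simp
  | add p q ihp ihq => rw [map_add, ihp, ihq, Finsupp.add_apply, add_smul]
  | single w c =>
    rw [single_eq_smul_W, map_smul, lift_W, Finsupp.smul_apply, W_apply_nil]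
    by_cases h : w = [] <;> simp [h, smul_smul]

lemma convW_id_A : convW LinearMap.id (lift AW) = raW := by
  funext w
  rw [convW, raW]
  refine Finset.sum_congr rfl fun i _ => ?_
  rw [LinearMap.id_apply, lift_W]

lemma raW_funext : raW = fun w => if w = [] then W [] else (0 : H1) := funext raW_eq

lemma CL2 (u v : List ℕ+) :
    (∑ i ∈ Finset.range (u.length + 1), ∑ j ∈ Finset.range (v.length + 1),
      harm (harmW (u.take i) (v.take j)) (lift AW (harmW (u.drop i) (v.drop j)))) =
      (harmW u v) [] • W [] := by
  have h := conv_mul u v LinearMap.id (lift AW)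
  rw [Phi, convW_id_A, raW_funext, lift_eps] at h
  simp only [LinearMap.id_coe, id_eq] at h
  exact h.symm

lemma double_split (n m : ℕ) (T : ℕ → ℕ → H1) :
    (∑ i ∈ Finset.range (n + 1), ∑ j ∈ Finset.range (m + 1), T i j) =
      (∑ i ∈ Finset.range n, ∑ j ∈ Finset.range (m + 1), T (i + 1) j) +
        ((∑ j ∈ Finset.range m, T 0 (j + 1)) + T 0 0) := by
  rw [Finset.sum_range_succ' (fun i => ∑ j ∈ Finset.range (m + 1), T i j) n,
    Finset.sum_range_succ' (T 0) m]

lemma CL3 (u v : List ℕ+) :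
    (∑ i ∈ Finset.range (u.length + 1), ∑ j ∈ Finset.range (v.length + 1),
      harm (harmW (u.take i) (v.take j)) (harm (AW (u.drop i)) (AW (v.drop j)))) =
      (harmW u v) [] • W [] := by
  have step : ∀ i j : ℕ,
      harm (harmW (u.take i) (v.take j)) (harm (AW (u.drop i)) (AW (v.drop j))) =
      harm (harm (W (u.take i)) (AW (u.drop i))) (harm (W (v.take j)) (AW (v.drop j))) := by
    intro i j
    rw [← harm_W_W, harm_swap]
  simp only [step]
  rw [show (∑ i ∈ Finset.range (u.length + 1), ∑ j ∈ Finset.range (v.length + 1),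
      harm (harm (W (u.take i)) (AW (u.drop i))) (harm (W (v.take j)) (AW (v.drop j)))) =
    harm (∑ i ∈ Finset.range (u.length + 1), harm (W (u.take i)) (AW (u.drop i)))
      (∑ j ∈ Finset.range (v.length + 1), harm (W (v.take j)) (AW (v.drop j))) from by
    rw [harm_sum_left]
    exact Finset.sum_congr rfl fun i _ => by rw [harm_sum_right]]
  rw [show (∑ i ∈ Finset.range (u.length + 1), harm (W (u.take i)) (AW (u.drop i))) = raW u
      from rfl,
    show (∑ j ∈ Finset.range (v.length + 1), harm (W (v.take j)) (AW (v.drop j))) = raW v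
      from rfl, raW_eq, raW_eq, harmW_apply_nil]
  by_cases hu : u = [] <;> by_cases hv : v = [] <;>
    simp [hu, hv, harm_zero_left, harm_zero_right, harm_nil_left]

theorem A_mul : ∀ u v : List ℕ+, lift AW (harmW u v) = harm (AW u) (AW v) := by
  intro u v
  have h2 := CL2 u v
  have h3 := CL3 u v
  rw [double_split] at h2 h3
  have hc1 : (∑ i ∈ Finset.range u.length, ∑ j ∈ Finset.range (v.length + 1),
      harm (harmW (u.take (i + 1)) (v.take j)) (lift AW (harmW (u.drop (i + 1)) (v.drop j)))) =
      ∑ i ∈ Finset.range u.length, ∑ j ∈ Finset.range (v.length + 1),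
      harm (harmW (u.take (i + 1)) (v.take j)) (harm (AW (u.drop (i + 1))) (AW (v.drop j))) := by
    refine Finset.sum_congr rfl fun i hi => Finset.sum_congr rfl fun j hj => ?_
    rw [A_mul (u.drop (i + 1)) (v.drop j)]
  have hc2 : (∑ j ∈ Finset.range v.length,
      harm (harmW (u.take 0) (v.take (j + 1))) (lift AW (harmW (u.drop 0) (v.drop (j + 1))))) =
      ∑ j ∈ Finset.range v.length,
      harm (harmW (u.take 0) (v.take (j + 1))) (harm (AW (u.drop 0)) (AW (v.drop (j + 1)))) := by
    refine Finset.sum_congr rfl fun j hj => ?_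
    rw [A_mul (u.drop 0) (v.drop (j + 1))]
  rw [hc1, hc2] at h2
  have h00 : ∀ X : H1, harm (harmW (u.take 0) (v.take 0)) X = X := by
    intro X
    rw [List.take_zero, List.take_zero, harmW_nil_left, harm_nil_left]
  rw [List.drop_zero, List.drop_zero] at h2 h3
  rw [h00] at h2 h3
  have := h2.trans h3.symm
  exact add_left_cancel (add_left_cancel this)
  termination_by u v => u.length + v.length
  decreasing_by
  · have hi' : i < u.length := Finset.mem_range.mp hi
    have hj' : j < v.length + 1 := Finset.mem_range.mp hj
    simp only [List.length_drop]
    omega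
  · have hj' : j < v.length := Finset.mem_range.mp hj
    simp only [List.length_drop, List.drop_zero]
    omega

lemma A_mul_ext (g h : H1) : lift AW (harm g h) = harm (lift AW g) (lift AW h) := by
  induction g using Finsupp.induction_linear with
  | zero => simp [harm_zero_left]
  | add p q ihp ihq => rw [harm_add_left, map_add, ihp, ihq, map_add, harm_add_left]
  | single u c =>
    induction h using Finsupp.induction_linear with
    | zero => simp [harm_zero_right]
    | add p q ihp ihq => rw [harm_add_right, map_add, ihp, ihq, map_add, harm_add_right]
    | single v d =>
      rw [single_eq_smul_W, single_eq_smul_W]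
      simp only [harm_smul_left, harm_smul_right, map_smul, lift_W]
      rw [harm_W_W, A_mul]

/-! ### `σ₁` lemmas -/

lemma pplus_zero (k : ℕ+) : pplus k 0 = k := rfl

lemma pplus_one (k : ℕ+) : pplus k 1 = k + 1 := rfl

lemma sigW_zero : ∀ ks : List ℕ+, sigW 0 ks = W ks
  | [] => by rw [sigW]; simp
  | (k :: ks) => by
    rw [sigW, Finset.sum_range_one, sigW_zero ks, pplus_zero, consL_W]
    simp

lemma sigW_one_nil : sigW 1 [] = 0 := by rw [sigW]; simp

lemma sigW_one_cons (k : ℕ+) (ks : List ℕ+) :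
    sigW 1 (k :: ks) = consL k (sigW 1 ks) + (((k : ℕ)) : ℚ) • consL (k + 1) (W ks) := by
  rw [sigW, Finset.sum_range_succ, Finset.sum_range_one, sigW_zero, pplus_zero, pplus_one]
  simp [Nat.choose_one_right]

lemma mulRk_W (k : ℕ+) (w : List ℕ+) : mulRk k (W w) = W (w ++ [k]) := by
  simp [mulRk, W, Finsupp.mapDomain_single]

lemma mulRk_zero (k : ℕ+) : mulRk k (0 : H1) = 0 := Finsupp.mapDomain_zero

lemma mulRk_add (k : ℕ+) (g h : H1) : mulRk k (g + h) = mulRk k g + mulRk k h :=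
  Finsupp.mapDomain_add

lemma mulRk_smul (k : ℕ+) (c : ℚ) (h : H1) : mulRk k (c • h) = c • mulRk k h :=
  Finsupp.mapDomain_smul c h

lemma mulRk_consL (k a : ℕ+) (h : H1) : mulRk k (consL a h) = consL a (mulRk k h) := by
  rw [mulRk, consL, ← Finsupp.mapDomain_comp, mulRk, consL, ← Finsupp.mapDomain_comp]
  rfl

lemma sigW_one_concat : ∀ (x : List ℕ+) (k : ℕ+),
    sigW 1 (x ++ [k]) = mulRk k (sigW 1 x) + (((k : ℕ)) : ℚ) • mulRk (k + 1) (W x)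
  | [], k => by
    simp only [List.nil_append, sigW_one_cons, sigW_one_nil, consL_zero, mulRk_zero, consL_W,
      mulRk_W, zero_add, List.nil_append]
  | (a :: x), k => by
    rw [List.cons_append, sigW_one_cons, sigW_one_concat x k, sigW_one_cons]
    simp only [consL_add, consL_smul, mulRk_add, mulRk_smul, mulRk_consL, consL_W, mulRk_W,
      List.cons_append]
    abel

noncomputable def revD : H1 →ₗ[ℚ] H1 := Finsupp.lmapDomain ℚ ℚ List.reverse

lemma revD_apply (h : H1) : revD h = Finsupp.mapDomain List.reverse h := rfl

lemma revD_W (w : List ℕ+) : revD (W w) = W w.reverse := by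
  rw [revD_apply, W, Finsupp.mapDomain_single]; rfl

lemma revD_consL (a : ℕ+) (h : H1) : revD (consL a h) = mulRk a (revD h) := by
  rw [revD_apply, consL, ← Finsupp.mapDomain_comp, mulRk, revD_apply, ← Finsupp.mapDomain_comp]
  congr 1
  funext w
  simp

lemma sigW_one_rev : ∀ q : List ℕ+, sigW 1 q.reverse = revD (sigW 1 q)
  | [] => by rw [List.reverse_nil, sigW_one_nil, map_zero]
  | (a :: x) => by
    rw [List.reverse_cons, sigW_one_concat, sigW_one_rev x, sigW_one_cons, map_add, map_smul,
      revD_consL, revD_consL, revD_W]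

lemma lift_revD (F : List ℕ+ → H1) (h : H1) :
    lift F (revD h) = lift (fun w => F w.reverse) h := by
  rw [revD_apply, lift, lift, Finsupp.linearCombination_mapDomain]
  rfl

lemma Stt_lift (h : H1) : Stt h = lift SttW h := by rw [Stt, lift_apply]

lemma sig_lift (m : ℕ) (h : H1) : sig m h = lift (sigW m) h := by rw [sig, lift_apply]

lemma psi_lift (h : H1) : psi h = lift psiW h := by rw [psi, lift_apply]

lemma G_bridge (q : List ℕ+) : Stt (sigW 1 q.reverse) = lift AW (sigW 1 q) := by
  rw [Stt_lift, sigW_one_rev, lift_revD]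
  rfl

/-! ### `σ₁` is a derivation for the harmonic product -/

lemma lift_linear_comm (L : H1 →ₗ[ℚ] H1) (F : List ℕ+ → H1) (h : H1) :
    lift (fun w => L (F w)) h = L (lift F h) := by
  induction h using Finsupp.induction_linear with
  | zero => simp
  | add p q ihp ihq => rw [map_add, map_add, ihp, ihq, map_add]
  | single w c => rw [single_eq_smul_W, map_smul, map_smul, lift_W, lift_W, map_smul]

lemma lift_W_id (h : H1) : lift W h = h := by
  rw [lift_apply]
  conv_rhs => rw [← h.sum_single]
  exact Finsupp.sum_congr fun w _ => (single_eq_smul_W w _).symm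

lemma sig1_consL (a : ℕ+) (h : H1) :
    lift (sigW 1) (consL a h) =
      consL a (lift (sigW 1) h) + (((a : ℕ)) : ℚ) • consL (a + 1) h := by
  rw [lift_consL]
  rw [show (fun w => sigW 1 (a :: w)) =
    fun w => consL a (sigW 1 w) + (((a : ℕ)) : ℚ) • consL (a + 1) (W w)
    from funext fun w => sigW_one_cons a w, lift_add_fun]
  congr 1
  · exact lift_linear_comm (consLL a) (sigW 1) h
  · have : (fun w => (((a : ℕ)) : ℚ) • consL (a + 1) (W w)) =
        fun w => ((((a : ℕ)) : ℚ) • consLL (a + 1)) (W w) := rfl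
    rw [this, lift_linear_comm, lift_W_id]
    rfl

theorem D_der : ∀ u v : List ℕ+,
    lift (sigW 1) (harmW u v) = harm (sigW 1 u) (W v) + harm (W u) (sigW 1 v)
  | [], v => by
    rw [harmW_nil_left, lift_W, sigW_one_nil, harm_zero_left, harm_nil_left, zero_add]
  | (k :: u), [] => by
    rw [harmW_nil_right, lift_W, sigW_one_nil, harm_zero_right, harm_nil_right, add_zero]
  | (a :: u), (b :: v) => by
    have hx : ∀ (x : ℕ+) (G : H1), harm (consL x G) (W (b :: v)) =
        consL x (harm G (W (b :: v))) + consL b (harm (consL x G) (W v)) +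
          consL (x + b) (harm G (W v)) := by
      intro x G
      conv_lhs => rw [← consL_W b v]
      rw [harm_consL_consL, consL_W]
    have hy : ∀ (y : ℕ+) (E : H1), harm (W (a :: u)) (consL y E) =
        consL a (harm (W u) (consL y E)) + consL y (harm (W (a :: u)) E) +
          consL (a + y) (harm (W u) E) := by
      intro y E
      conv_lhs => rw [← consL_W a u]
      rw [harm_consL_consL, consL_W]
    rw [harmW_cons_cons, map_add, map_add, sig1_consL, sig1_consL, sig1_consL,
      D_der u (b :: v), D_der (a :: u) v, D_der u v]
    conv_rhs => rw [sigW_one_cons a u, sigW_one_cons b v]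
    rw [harm_add_left, harm_smul_left, harm_add_right, harm_smul_right]
    rw [hx a (sigW 1 u), hx (a + 1) (W u), hy b (sigW 1 v), hy (b + 1) (W v)]
    -- expand the remaining composite pieces on the left-hand side
    conv_lhs => rw [sigW_one_cons b v, sigW_one_cons a u]
    simp only [harm_add_left, harm_add_right, harm_smul_left, harm_smul_right, consL_add,
      consL_smul, harm_W_W, smul_add, PNat.add_coe, Nat.cast_add, add_smul]
    rw [show (a + 1 + b : ℕ+) = a + b + 1 from add_right_comm a 1 b]
    abel
  termination_by u v => u.length + v.length

/-! ### `ψ` as a convolution, and the main theorem -/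

lemma psiW_eq (w : List ℕ+) :
    psiW w = convW LinearMap.id (lift AW ∘ₗ lift (sigW 1)) w := by
  rw [psiW, convW, Finset.sum_range_succ]
  rw [show (lift AW ∘ₗ lift (sigW 1)) (W (w.drop w.length)) = 0 from by
    rw [List.drop_length, LinearMap.comp_apply, lift_W, sigW_one_nil, map_zero]]
  rw [harm_zero_right, add_zero]
  refine Finset.sum_congr rfl fun i _ => ?_
  rw [LinearMap.id_apply, LinearMap.comp_apply, lift_W, G_bridge]

theorem psi_harm_W (u v : List ℕ+) (hu : u ≠ []) (hv : v ≠ []) :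
    lift psiW (harmW u v) = 0 := by
  rw [show lift psiW = Phi LinearMap.id (lift AW ∘ₗ lift (sigW 1)) from by
    rw [Phi]; exact congrArg lift (funext psiW_eq)]
  rw [conv_mul]
  have step : ∀ i j : ℕ,
      harm ((LinearMap.id : H1 →ₗ[ℚ] H1) (harmW (u.take i) (v.take j)))
        ((lift AW ∘ₗ lift (sigW 1)) (harmW (u.drop i) (v.drop j))) =
      harm (harm (W (u.take i)) (lift AW (sigW 1 (u.drop i))))
          (harm (W (v.take j)) (AW (v.drop j))) +
        harm (harm (W (u.take i)) (AW (u.drop i)))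
          (harm (W (v.take j)) (lift AW (sigW 1 (v.drop j)))) := by
    intro i j
    rw [LinearMap.id_apply, LinearMap.comp_apply, D_der, map_add, A_mul_ext, A_mul_ext,
      lift_W, lift_W, harm_add_right, ← harm_W_W,
      harm_swap (W (u.take i)) (W (v.take j)) (lift AW (sigW 1 (u.drop i))) (AW (v.drop j)),
      harm_swap (W (u.take i)) (W (v.take j)) (AW (u.drop i)) (lift AW (sigW 1 (v.drop j)))]
  simp only [step]
  rw [Finset.sum_congr rfl fun i _ => Finset.sum_add_distrib, Finset.sum_add_distrib]
  have fact1 : (∑ i ∈ Finset.range (u.length + 1), ∑ j ∈ Finset.range (v.length + 1),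
      harm (harm (W (u.take i)) (lift AW (sigW 1 (u.drop i))))
        (harm (W (v.take j)) (AW (v.drop j)))) = 0 := by
    rw [show (∑ i ∈ Finset.range (u.length + 1), ∑ j ∈ Finset.range (v.length + 1),
        harm (harm (W (u.take i)) (lift AW (sigW 1 (u.drop i))))
          (harm (W (v.take j)) (AW (v.drop j)))) =
      harm (∑ i ∈ Finset.range (u.length + 1), harm (W (u.take i)) (lift AW (sigW 1 (u.drop i))))
        (∑ j ∈ Finset.range (v.length + 1), harm (W (v.take j)) (AW (v.drop j))) from by
      rw [harm_sum_left]
      exact Finset.sum_congr rfl fun i _ => by rw [harm_sum_right]]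
    rw [show (∑ j ∈ Finset.range (v.length + 1), harm (W (v.take j)) (AW (v.drop j))) = raW v
      from rfl, raW_eq, if_neg hv, harm_zero_right]
  have fact2 : (∑ i ∈ Finset.range (u.length + 1), ∑ j ∈ Finset.range (v.length + 1),
      harm (harm (W (u.take i)) (AW (u.drop i)))
        (harm (W (v.take j)) (lift AW (sigW 1 (v.drop j))))) = 0 := by
    rw [show (∑ i ∈ Finset.range (u.length + 1), ∑ j ∈ Finset.range (v.length + 1),
        harm (harm (W (u.take i)) (AW (u.drop i)))
          (harm (W (v.take j)) (lift AW (sigW 1 (v.drop j))))) =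
      harm (∑ i ∈ Finset.range (u.length + 1), harm (W (u.take i)) (AW (u.drop i)))
        (∑ j ∈ Finset.range (v.length + 1),
          harm (W (v.take j)) (lift AW (sigW 1 (v.drop j)))) from by
      rw [harm_sum_left]
      exact Finset.sum_congr rfl fun i _ => by rw [harm_sum_right]]
    rw [show (∑ i ∈ Finset.range (u.length + 1), harm (W (u.take i)) (AW (u.drop i))) = raW u
      from rfl, raW_eq, if_neg hu, harm_zero_left]
  rw [fact1, fact2, add_zero]

lemma psi_zero : psi 0 = 0 := by rw [psi_lift, map_zero]
lemma psi_add (g h : H1) : psi (g + h) = psi g + psi h := by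
  rw [psi_lift, psi_lift, psi_lift, map_add]
lemma psi_smul (c : ℚ) (h : H1) : psi (c • h) = c • psi h := by
  rw [psi_lift, psi_lift, map_smul]

noncomputable def harmRmap (x : H1) : H1 →ₗ[ℚ] H1 where
  toFun y := harm x y
  map_add' a b := harm_add_right x a b
  map_smul' c a := harm_smul_right c x a

noncomputable def harmLmap (y : H1) : H1 →ₗ[ℚ] H1 where
  toFun x := harm x y
  map_add' a b := harm_add_left a b y
  map_smul' c a := harm_smul_left c a y

/-- Lemma 7: `ker ψ ⊇ yH ∗ yH`, i.e. `ψ(u ∗ v) = 0` for `u, v ∈ yH`. -/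
theorem psi_harm_eq_zero (u : H1) (hu : u ∈ yH1) (v : H1) (hv : v ∈ yH1) :
    psi (harm u v) = 0 := by
  have step1 : ∀ (k : ℕ+) (ks : List ℕ+) (y : H1), y ∈ yH1 →
      lift psiW (harm (W (k :: ks)) y) = 0 := by
    intro k ks y hy
    have hle : yH1 ≤ LinearMap.ker (lift psiW ∘ₗ harmRmap (W (k :: ks))) := by
      rw [yH1]
      apply Submodule.span_le.mpr
      rintro x ⟨l, ls, rfl⟩
      simp only [SetLike.mem_coe, LinearMap.mem_ker, LinearMap.comp_apply]
      show lift psiW (harm (W (k :: ks)) (W (l :: ls))) = 0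
      rw [harm_W_W]
      exact psi_harm_W _ _ (by simp) (by simp)
    have h := hle hy
    simp only [LinearMap.mem_ker, LinearMap.comp_apply] at h
    exact h
  have step2 : lift psiW (harm u v) = 0 := by
    have hle2 : yH1 ≤ LinearMap.ker (lift psiW ∘ₗ harmLmap v) := by
      rw [yH1]
      apply Submodule.span_le.mpr
      rintro x ⟨k, ks, rfl⟩
      simp only [SetLike.mem_coe, LinearMap.mem_ker, LinearMap.comp_apply]
      show lift psiW (harm (W (k :: ks)) v) = 0
      exact step1 k ks v hv
    have h := hle2 hu
    simp only [LinearMap.mem_ker, LinearMap.comp_apply] at h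
    exact h
  rw [psi_lift]
  exact step2
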